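/- Let τ be a finite rooted ordered tree with total progeny ζ(τ), let u(0) < u(1) < ... < u(ζ(τ)-1) be its vertices in lexicographical order, and let W(τ) be the Łukasiewicz path defined by W_0(τ)=0 and W_{n+1}(τ)-W_n(τ)=k_{u(n)}(τ)-1, where k_v(τ) is the number of children of v. Then for every 0 ≤ n < ζ(τ), the height H_n(τ) = |u(n)| satisfies H_n(τ) = Card{ 0 ≤ j < n : W_j(τ) = min_{j ≤ k ≤ n} W_k(τ) }. -/

import Mathlib

/-- A rooted ordered tree: a finite, prefix-closed set of words over the positive
integers containing the root `[]`, where the children of `u` are `u ++ [j]` for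
`1 ≤ j ≤ k_u(τ)`. -/
def IsTree (τ : Finset (List ℕ)) : Prop :=
  [] ∈ τ ∧
  (∀ u : List ℕ, ∀ j : ℕ, u ++ [j] ∈ τ → u ∈ τ) ∧
  (∀ u ∈ τ, ∀ j : ℕ, u ++ [j] ∈ τ ↔ 1 ≤ j ∧ j ≤
    (τ.filter (fun v => v.length = u.length + 1 ∧ v.take u.length = u)).card)

/-- The number of children `k_u(τ)` of the vertex `u` in `τ`. -/
def childCount (τ : Finset (List ℕ)) (u : List ℕ) : ℕ :=
  (τ.filter (fun v => v.length = u.length + 1 ∧ v.take u.length = u)).card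

/-- The `n`-th vertex of `τ` in lexicographical order. -/
def vertexAt (τ : Finset (List ℕ)) (n : ℕ) : List ℕ :=
  (τ.sort (· ≤ ·)).getD n []

/-- The height process of `τ`: the generation of the `n`-th vertex in
lexicographical order. -/
def treeHeight (τ : Finset (List ℕ)) (n : ℕ) : ℕ :=
  (vertexAt τ n).length

/-- The Łukasiewicz path of `τ`: `W 0 = 0`, `W (n+1) - W n = k_{u(n)}(τ) - 1`. -/
def treeWalk (τ : Finset (List ℕ)) : ℕ → ℤ
  | 0 => 0
  | n + 1 => treeWalk τ n + (childCount τ (vertexAt τ n) : ℤ) - 1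

namespace LukasHelper

open List Finset

/-! ### Small list lemmas -/

lemma take_append_cons : ∀ (p : List ℕ) (x : ℕ) (s : List ℕ),
    (p ++ x :: s).take (p.length + 1) = p ++ [x]
  | [], _, _ => rfl
  | a :: p, x, s => by
    simp only [List.cons_append, List.length_cons, List.take_succ_cons,
      take_append_cons p x s]

lemma getD_append_cons : ∀ (p : List ℕ) (x : ℕ) (s : List ℕ),
    (p ++ x :: s).getD p.length 0 = x
  | [], _, _ => rfl
  | a :: p, x, s => by
    simpa using getD_append_cons p x s

/-! ### Lexicographic order lemmas -/

lemma lt_of_prefix_ne {a b : List ℕ} (h : a <+: b) (hne : a ≠ b) : a < b := by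
  obtain ⟨t, rfl⟩ := h
  induction a with
  | nil =>
    cases t with
    | nil => simp at hne
    | cons x s => exact List.Lex.nil
  | cons x s ih =>
    have : s ≠ s ++ t := by
      intro h; apply hne; rw [List.cons_append, ← h]
    exact List.Lex.cons (ih this)

lemma le_of_prefix {a b : List ℕ} (h : a <+: b) : a ≤ b := by
  rcases eq_or_ne a b with rfl | hne
  · exact le_rfl
  · exact le_of_lt (lt_of_prefix_ne h hne)

lemma lex_middle {p s t : List ℕ} {x y : ℕ} (h : x < y) :
    p ++ x :: s < p ++ y :: t :=
  List.Lex.append_left _ (List.Lex.rel h) p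

lemma lex_decomp {a b : List ℕ} (h : a < b) :
    a <+: b ∨ ∃ p x y s t, a = p ++ x :: s ∧ b = p ++ y :: t ∧ x < y := by
  induction (h : List.Lex (· < ·) a b) with
  | nil => exact Or.inl ⟨_, rfl⟩
  | @rel x s y t h => exact Or.inr ⟨[], x, y, s, t, rfl, rfl, h⟩
  | @cons x s t h ih =>
    rcases ih with ⟨r, rfl⟩ | ⟨p, u, v, s', t', rfl, rfl, huv⟩
    · exact Or.inl ⟨r, rfl⟩
    · exact Or.inr ⟨x :: p, u, v, s', t', rfl, rfl, huv⟩

lemma prefix_sandwich {a b c : List ℕ} (hac : a <+: c) (hab : a ≤ b) (hbc : b ≤ c) :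
    a <+: b := by
  rcases eq_or_lt_of_le hab with rfl | hab
  · exact List.prefix_refl a
  rcases lex_decomp hab with hp | ⟨p, x, y, s, t, rfl, rfl, hxy⟩
  · exact hp
  · exfalso
    obtain ⟨r, hr⟩ := hac
    have : p ++ x :: (s ++ r) = c := by simpa using hr
    have hcb : c < p ++ y :: t := by rw [← this]; exact lex_middle hxy
    exact absurd (lt_of_le_of_lt hbc hcb) (lt_irrefl _)

/-! ### Basic tree lemmas -/

variable {τ : Finset (List ℕ)}

lemma mem_append_iff (hτ : IsTree τ) {u : List ℕ} (hu : u ∈ τ) (j : ℕ) :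
    u ++ [j] ∈ τ ↔ 1 ≤ j ∧ j ≤ childCount τ u :=
  hτ.2.2 u hu j

lemma mem_take (hτ : IsTree τ) {u : List ℕ} (hu : u ∈ τ) (i : ℕ) : u.take i ∈ τ := by
  induction u using List.reverseRecOn generalizing i with
  | nil => simpa using hu
  | append_singleton v a ih =>
    rcases le_or_gt i v.length with hi | hi
    · rw [List.take_append_of_le_length hi]
      exact ih (hτ.2.1 v a hu) i
    · rw [List.take_of_length_le (by simpa using hi)]
      exact hu

lemma take_succ_eq {w : List ℕ} {i : ℕ} (h : i < w.length) :
    w.take (i + 1) = w.take i ++ [w.getD i 0] := by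
  rw [List.take_succ, List.getD_eq_getElem w 0 h, List.getElem?_eq_getElem h]
  rfl

lemma letter_le (hτ : IsTree τ) {w : List ℕ} (hw : w ∈ τ) {i : ℕ} (h : i < w.length) :
    1 ≤ w.getD i 0 ∧ w.getD i 0 ≤ childCount τ (w.take i) := by
  have h1 : w.take i ++ [w.getD i 0] ∈ τ := by
    rw [← take_succ_eq h]; exact mem_take hτ hw _
  exact (mem_append_iff hτ (mem_take hτ hw i) _).1 h1

/-! ### The sorted enumeration -/

lemma length_sort' : (τ.sort (· ≤ ·)).length = τ.card := Finset.length_sort _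

lemma vertexAt_eq_get {n : ℕ} (hn : n < τ.card) :
    vertexAt τ n = (τ.sort (· ≤ ·)).get ⟨n, by rwa [length_sort']⟩ := by
  unfold vertexAt
  exact List.getD_eq_getElem _ _ (by rwa [length_sort'])

lemma vertexAt_mem {n : ℕ} (hn : n < τ.card) : vertexAt τ n ∈ τ := by
  rw [vertexAt_eq_get hn, ← Finset.mem_sort (α := List ℕ) (· ≤ ·)]
  exact List.get_mem _ _

lemma vertexAt_strictMono {m n : ℕ} (hmn : m < n) (hn : n < τ.card) :
    vertexAt τ m < vertexAt τ n := by
  rw [vertexAt_eq_get (lt_trans hmn hn), vertexAt_eq_get hn]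
  exact (Finset.sortedLT_sort τ).strictMono_get (by simpa using hmn)

lemma vertexAt_mono {m n : ℕ} (hmn : m ≤ n) (hn : n < τ.card) :
    vertexAt τ m ≤ vertexAt τ n := by
  rcases eq_or_lt_of_le hmn with rfl | h
  · exact le_rfl
  · exact le_of_lt (vertexAt_strictMono h hn)

/-- index of a vertex in the sorted enumeration -/
noncomputable def idx (τ : Finset (List ℕ)) (v : List ℕ) : ℕ :=
  sInf {m | vertexAt τ m = v}

lemma exists_index {v : List ℕ} (hv : v ∈ τ) : ∃ m, m < τ.card ∧ vertexAt τ m = v := by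
  have hv' : v ∈ τ.sort (· ≤ ·) := (Finset.mem_sort (α := List ℕ) (· ≤ ·)).2 hv
  obtain ⟨⟨m, hm⟩, he⟩ := List.mem_iff_get.1 hv'
  have hm' : m < τ.card := by rwa [length_sort'] at hm
  exact ⟨m, hm', by rw [vertexAt_eq_get hm']; exact he⟩

lemma idx_lt_card {v : List ℕ} (hv : v ∈ τ) : idx τ v < τ.card := by
  obtain ⟨m, hm, he⟩ := exists_index hv
  exact lt_of_le_of_lt (Nat.sInf_le he) hm

lemma vertexAt_idx {v : List ℕ} (hv : v ∈ τ) : vertexAt τ (idx τ v) = v := by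
  obtain ⟨m, hm, he⟩ := exists_index hv
  have hne : {m | vertexAt τ m = v}.Nonempty := ⟨m, he⟩
  exact Nat.sInf_mem hne

lemma idx_lt_idx {v w : List ℕ} (hv : v ∈ τ) (hw : w ∈ τ) (h : v < w) :
    idx τ v < idx τ w := by
  by_contra hc
  push_neg at hc
  have := vertexAt_mono hc (idx_lt_card hv)
  rw [vertexAt_idx hv, vertexAt_idx hw] at this
  exact absurd (lt_of_le_of_lt this h) (lt_irrefl _)

lemma idx_vertexAt {n : ℕ} (hn : n < τ.card) : idx τ (vertexAt τ n) = n := by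
  have hm := vertexAt_idx (vertexAt_mem hn)
  rcases lt_trichotomy (idx τ (vertexAt τ n)) n with h | h | h
  · have := vertexAt_strictMono h hn
    rw [hm] at this; exact absurd this (lt_irrefl _)
  · exact h
  · have := vertexAt_strictMono h (idx_lt_card (vertexAt_mem hn))
    rw [hm] at this; exact absurd this (lt_irrefl _)

lemma vertexAt_zero (hτ : IsTree τ) (h0 : 0 < τ.card) : vertexAt τ 0 = [] := by
  have h1 : idx τ [] < τ.card := idx_lt_card hτ.1
  rcases Nat.eq_zero_or_pos (idx τ []) with h | h
  · rw [← h, vertexAt_idx hτ.1]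
  · have := vertexAt_strictMono h h1
    rw [vertexAt_idx hτ.1] at this
    exact absurd this (by generalize vertexAt τ 0 = x; intro h; cases h)

lemma vertexAt_succ_min {n : ℕ} (hn : n + 1 < τ.card) {w : List ℕ} (hw : w ∈ τ)
    (h : vertexAt τ n < w) : vertexAt τ (n + 1) ≤ w := by
  have h1 : n + 1 ≤ idx τ w := by
    by_contra hc
    push_neg at hc
    have := vertexAt_mono (Nat.lt_succ_iff.1 hc) (lt_trans (Nat.lt_succ_self n) hn)
    rw [vertexAt_idx hw] at this
    exact absurd (lt_of_le_of_lt this h) (lt_irrefl _)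
  have := vertexAt_mono h1 (idx_lt_card hw)
  rwa [vertexAt_idx hw] at this

lemma vertexAt_succ_unique {n : ℕ} (hn : n + 1 < τ.card) {v : List ℕ} (hv : v ∈ τ)
    (h1 : vertexAt τ n < v) (h2 : ∀ w ∈ τ, vertexAt τ n < w → v ≤ w) :
    vertexAt τ (n + 1) = v :=
  le_antisymm (vertexAt_succ_min hn hv h1)
    (h2 _ (vertexAt_mem hn) (vertexAt_strictMono (Nat.lt_succ_self n) hn))

/-! ### The sum formula for the walk -/

/-- `wsum τ u = ∑_{i < |u|} (k_{u.take i} - u_i)`. -/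
def wsum (τ : Finset (List ℕ)) (u : List ℕ) : ℤ :=
  ∑ i ∈ Finset.range u.length, ((childCount τ (u.take i) : ℤ) - (u.getD i 0 : ℤ))

lemma wsum_nil : wsum τ [] = 0 := by simp [wsum]

lemma wsum_append_singleton (u : List ℕ) (a : ℕ) :
    wsum τ (u ++ [a]) = wsum τ u + (childCount τ u : ℤ) - a := by
  unfold wsum
  rw [List.length_append, List.length_singleton, Finset.sum_range_succ]
  have h1 : (u ++ [a]).take u.length = u := by
    rw [List.take_append_of_le_length le_rfl, List.take_of_length_le le_rfl]
  have h2 : (u ++ [a]).getD u.length 0 = a := getD_append_cons u a []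
  rw [h1, h2]
  have h3 : ∀ i ∈ Finset.range u.length,
      ((childCount τ ((u ++ [a]).take i) : ℤ) - ((u ++ [a]).getD i 0 : ℤ)) =
      ((childCount τ (u.take i) : ℤ) - (u.getD i 0 : ℤ)) := by
    intro i hi
    rw [Finset.mem_range] at hi
    rw [List.take_append_of_le_length (le_of_lt hi),
      List.getD_eq_getElem _ _ (by simp; omega), List.getD_eq_getElem _ _ hi,
      List.getElem_append_left hi]
  rw [Finset.sum_congr rfl h3]
  ring

lemma wsum_take (w : List ℕ) {m : ℕ} (hm : m ≤ w.length) :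
    wsum τ w = wsum τ (w.take m) +
      ∑ i ∈ Finset.Ico m w.length, ((childCount τ (w.take i) : ℤ) - (w.getD i 0 : ℤ)) := by
  unfold wsum
  have hlen : (w.take m).length = m := by simp [Nat.min_eq_left hm]
  rw [hlen]
  have h1 : ∀ i ∈ Finset.range m,
      ((childCount τ ((w.take m).take i) : ℤ) - ((w.take m).getD i 0 : ℤ)) =
      ((childCount τ (w.take i) : ℤ) - (w.getD i 0 : ℤ)) := by
    intro i hi
    rw [Finset.mem_range] at hi
    have h2 : (w.take m).take i = w.take i := by
      rw [List.take_take, Nat.min_eq_left (le_of_lt hi)]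
    have hiw : i < w.length := lt_of_lt_of_le hi hm
    have h3 : (w.take m).getD i 0 = w.getD i 0 := by
      rw [List.getD_eq_getElem _ _ (by rw [hlen]; exact hi), List.getD_eq_getElem _ _ hiw,
        List.getElem_take]
    rw [h2, h3]
  rw [Finset.sum_congr rfl h1, Finset.range_eq_Ico, Finset.range_eq_Ico,
    Finset.sum_Ico_consecutive _ (Nat.zero_le m) hm]

lemma wsum_take_le (hτ : IsTree τ) {w : List ℕ} (hw : w ∈ τ) {m : ℕ} (hm : m ≤ w.length) :
    wsum τ (w.take m) ≤ wsum τ w := by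
  rw [wsum_take w hm]
  have : (0 : ℤ) ≤ ∑ i ∈ Finset.Ico m w.length,
      ((childCount τ (w.take i) : ℤ) - (w.getD i 0 : ℤ)) := by
    apply Finset.sum_nonneg
    intro i hi
    rw [Finset.mem_Ico] at hi
    have := (letter_le hτ hw hi.2).2
    omega
  omega

/-! ### Identifying the successor and the key recursion -/

/-- A leaf whose extension by any letter leaves the tree: useful sublemma. -/
lemma no_proper_extension (hτ : IsTree τ) {u w : List ℕ} (hu : u ∈ τ) (hw : w ∈ τ)
    (hleaf : childCount τ u = 0) (hpre : u <+: w) : w = u := by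
  obtain ⟨r, hr⟩ := hpre
  cases r with
  | nil => simpa using hr.symm
  | cons x t =>
    exfalso
    have ht : w.take (u.length + 1) = u ++ [x] := by
      rw [← hr]; exact take_append_cons u x t
    have h1 : u ++ [x] ∈ τ := by rw [← ht]; exact mem_take hτ hw _
    have := (mem_append_iff hτ hu x).1 h1
    omega

/-- If every letter of `u` is maximal and `u` has no children, `u` is the lex-max of `τ`. -/
lemma max_of_full (hτ : IsTree τ) {u : List ℕ} (hu : u ∈ τ)
    (hfull : ∀ i, i < u.length → u.getD i 0 = childCount τ (u.take i))
    (hleaf : childCount τ u = 0) {w : List ℕ} (hw : w ∈ τ) : w ≤ u := by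
  by_contra hc
  push_neg at hc
  rcases lex_decomp hc with hp | ⟨p, x, y, s, t, hu', hw', hxy⟩
  · -- u <+: w with u < w
    have := no_proper_extension hτ hu hw hleaf hp
    rw [this] at hc
    exact lt_irrefl _ hc
  · -- u = p ++ x :: s, w = p ++ y :: t, x < y
    subst hu'; subst hw'
    have hplen : p.length < (p ++ x :: s).length := by simp
    have htk : (p ++ x :: s).take p.length = p := by
      rw [List.take_append_of_le_length le_rfl, List.take_of_length_le le_rfl]
    have hgd : (p ++ x :: s).getD p.length 0 = x := getD_append_cons p x s
    have hx : x = childCount τ p := by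
      have := hfull p.length hplen
      rwa [htk, hgd] at this
    have h2 : p ++ [y] ∈ τ := by
      have : (p ++ y :: t).take (p.length + 1) = p ++ [y] := take_append_cons p y t
      rw [← this]; exact mem_take hτ hw _
    have hple : p ∈ τ := by
      have := mem_take hτ hw p.length
      rwa [List.take_append_of_le_length le_rfl, List.take_of_length_le le_rfl] at this
    have := (mem_append_iff hτ hple y).1 h2
    omega

lemma walk_recursion (hτ : IsTree τ) {n : ℕ} (hn : n + 1 < τ.card)
    (ih : treeWalk τ n = wsum τ (vertexAt τ n)) :
    treeWalk τ (n + 1) = wsum τ (vertexAt τ (n + 1)) := by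
  set u := vertexAt τ n with hu
  have hun : u ∈ τ := vertexAt_mem (lt_trans (Nat.lt_succ_self n) hn)
  rcases Nat.eq_zero_or_pos (childCount τ u) with hk | hk
  · -- leaf case
    set I : Finset ℕ := (Finset.range u.length).filter
      (fun i => u.getD i 0 < childCount τ (u.take i)) with hI
    have hIne : I.Nonempty := by
      by_contra hIe
      rw [Finset.not_nonempty_iff_eq_empty] at hIe
      have hfull : ∀ i, i < u.length → u.getD i 0 = childCount τ (u.take i) := by
        intro i hi
        have h1 := (letter_le hτ hun hi).2
        by_contra hne
        have : i ∈ I := by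
          rw [hI, Finset.mem_filter, Finset.mem_range]
          exact ⟨hi, lt_of_le_of_ne h1 hne⟩
        rw [hIe] at this
        exact absurd this (Finset.notMem_empty i)
      have := max_of_full hτ hun hfull hk (vertexAt_mem hn)
      exact absurd (lt_of_le_of_lt this
        (vertexAt_strictMono (Nat.lt_succ_self n) hn)) (lt_irrefl _)
    set i := I.max' hIne with hidef
    have hiI : i ∈ I := I.max'_mem hIne
    rw [hI, Finset.mem_filter, Finset.mem_range] at hiI
    obtain ⟨hilen, hilt⟩ := hiI
    set p := u.take i with hp
    set a := u.getD i 0 with ha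
    have hplen : p.length = i := by
      rw [hp]; simp [Nat.min_eq_left (le_of_lt hilen)]
    have hfull : ∀ j, i < j → j < u.length → u.getD j 0 = childCount τ (u.take j) := by
      intro j hij hj
      have h1 := (letter_le hτ hun hj).2
      by_contra hne
      have hjI : j ∈ I := by
        rw [hI, Finset.mem_filter, Finset.mem_range]
        exact ⟨hj, lt_of_le_of_ne h1 hne⟩
      exact absurd (I.le_max' j hjI) (not_le.2 hij)
    have hpmem : p ∈ τ := mem_take hτ hun i
    have hvmem : p ++ [a + 1] ∈ τ :=
      (mem_append_iff hτ hpmem (a + 1)).2 ⟨by omega, hilt⟩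
    have hudec : u = p ++ a :: u.drop (i + 1) := by
      conv_lhs => rw [← List.take_append_drop i u]
      rw [List.drop_eq_getElem_cons hilen, ← hp, ha, List.getD_eq_getElem _ _ hilen]
    have hlt : u < p ++ [a + 1] := by
      conv_lhs => rw [hudec]
      exact lex_middle (Nat.lt_succ_self a)
    have hmin : ∀ w ∈ τ, u < w → p ++ [a + 1] ≤ w := by
      intro w hw hlt'
      rcases lex_decomp hlt' with hpre | ⟨q, x, y, s, t, huq, hwq, hxy⟩
      · -- u <+: w impossible since u is a leaf
        exfalso
        have := no_proper_extension hτ hun hw hk hpre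
        rw [this] at hlt'
        exact lt_irrefl _ hlt'
      · have hqlen : q.length < u.length := by rw [huq]; simp
        have hqtk : u.take q.length = q := by
          rw [huq, List.take_append_of_le_length le_rfl, List.take_of_length_le le_rfl]
        have hqgd : u.getD q.length 0 = x := by
          rw [huq]; exact getD_append_cons q x s
        have hqmem : q ∈ τ := by rw [← hqtk]; exact mem_take hτ hun _
        have hwy : q ++ [y] ∈ τ := by
          have : w.take (q.length + 1) = q ++ [y] := by
            rw [hwq]; exact take_append_cons q y t
          rw [← this]; exact mem_take hτ hw _
        rcases lt_trichotomy q.length i with hqi | hqi | hqi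
        · -- first difference strictly before i
          have hqp : q.length < p.length := by omega
          have hptk : p.take q.length = q := by
            rw [hp, List.take_take, Nat.min_eq_left (le_of_lt hqi), hqtk]
          have hpgd : p.getD q.length 0 = x := by
            rw [List.getD_eq_getElem _ _ hqp]
            have he : p[q.length] = u[q.length]'(lt_trans hqi hilen) := by
              simp only [hp]
              exact List.getElem_take
            rw [he, ← List.getD_eq_getElem u 0 (lt_trans hqi hilen), hqgd]
          have hpdec : p = q ++ x :: p.drop (q.length + 1) := by
            conv_lhs => rw [← List.take_append_drop q.length p]
            rw [List.drop_eq_getElem_cons hqp, hptk, ← List.getD_eq_getElem p 0 hqp, hpgd]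
          have heq : p ++ [a + 1] = q ++ x :: (p.drop (q.length + 1) ++ [a + 1]) := by
            conv_lhs => rw [hpdec]
            simp
          rw [heq, hwq]
          exact le_of_lt (lex_middle hxy)
        · -- first difference exactly at i
          have hqp : q = p := by rw [← hqtk, hqi, ← hp]
          have hxa : x = a := by rw [← hqgd, hqi, ← ha]
          subst hqp
          have hxy' : a < y := hxa ▸ hxy
          rcases eq_or_lt_of_le (Nat.succ_le_of_lt hxy') with hy | hy
          · rw [hwq, ← hy]
            exact le_of_prefix ⟨t, by simp⟩
          · rw [hwq]
            exact le_of_lt (lex_middle hy)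
        · -- first difference after i : impossible by maximality
          exfalso
          have hmax := hfull q.length hqi hqlen
          rw [hqtk, hqgd] at hmax
          have hy := ((mem_append_iff hτ hqmem y).1 hwy).2
          omega
    have hsucc : vertexAt τ (n + 1) = p ++ [a + 1] :=
      vertexAt_succ_unique hn hvmem hlt hmin
    -- now compute wsum
    have hw1 : wsum τ (p ++ [a + 1]) = wsum τ p + (childCount τ p : ℤ) - (a + 1) := by
      rw [wsum_append_singleton]; push_cast; ring
    have hw2 : wsum τ u = wsum τ p + (childCount τ p : ℤ) - a := by
      have htk : u.take (i + 1) = p ++ [a] := by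
        rw [take_succ_eq hilen, ← hp, ← ha]
      have hrec := wsum_take (τ := τ) u (Nat.succ_le_of_lt hilen)
      rw [htk, wsum_append_singleton] at hrec
      have hzero : ∑ j ∈ Finset.Ico (i+1) u.length,
          ((childCount τ (u.take j) : ℤ) - (u.getD j 0 : ℤ)) = 0 := by
        apply Finset.sum_eq_zero
        intro j hj
        rw [Finset.mem_Ico] at hj
        rw [hfull j hj.1 hj.2]
        ring
      rw [hzero, add_zero] at hrec
      rw [hrec]
    rw [treeWalk, hsucc, hw1, ← hu, ih, hw2, hk]
    push_cast
    ring
  · -- internal vertex : successor is u ++ [1]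
    have hvmem : u ++ [1] ∈ τ := (mem_append_iff hτ hun 1).2 ⟨le_rfl, hk⟩
    have hlt : u < u ++ [1] :=
      lt_of_prefix_ne ⟨[1], rfl⟩ (by simp)
    have hmin : ∀ w ∈ τ, u < w → u ++ [1] ≤ w := by
      intro w hw hlt'
      rcases lex_decomp hlt' with hpre | ⟨q, x, y, s, t, huq, hwq, hxy⟩
      · obtain ⟨r, hr⟩ := hpre
        cases r with
        | nil =>
          exfalso
          have : u = w := by simpa using hr
          rw [this] at hlt'
          exact lt_irrefl _ hlt'
        | cons x t =>
          have ht : w.take (u.length + 1) = u ++ [x] := by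
            rw [← hr]; exact take_append_cons u x t
          have h1 : u ++ [x] ∈ τ := by rw [← ht]; exact mem_take hτ hw _
          have hx := (mem_append_iff hτ hun x).1 h1
          rcases eq_or_lt_of_le hx.1 with hx1 | hx1
          · rw [← hr, ← hx1]
            exact le_of_prefix ⟨t, by simp⟩
          · rw [← hr]
            have heq1 : u ++ [1] = u ++ 1 :: ([] : List ℕ) := by simp
            rw [heq1]
            exact le_of_lt (lex_middle hx1)
      · rw [huq, hwq]
        have heq1 : q ++ x :: s ++ [1] = q ++ x :: (s ++ [1]) := by simp
        rw [heq1]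
        exact le_of_lt (lex_middle hxy)
    have hsucc : vertexAt τ (n + 1) = u ++ [1] :=
      vertexAt_succ_unique hn hvmem hlt hmin
    rw [treeWalk, hsucc, wsum_append_singleton, ← hu, ih]
    push_cast
    ring

lemma walk_eq_wsum (hτ : IsTree τ) : ∀ {n : ℕ}, n < τ.card →
    treeWalk τ n = wsum τ (vertexAt τ n) := by
  intro n
  induction n with
  | zero =>
    intro h0
    rw [treeWalk, vertexAt_zero hτ h0, wsum_nil]
  | succ n ih =>
    intro hn
    exact walk_recursion hτ hn (ih (lt_trans (Nat.lt_succ_self n) hn))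

/-! ### Ancestors and minima -/

lemma walk_le_of_prefix (hτ : IsTree τ) {j k n : ℕ} (hjk : j ≤ k) (hkn : k ≤ n)
    (hn : n < τ.card) (hpre : vertexAt τ j <+: vertexAt τ n) :
    treeWalk τ j ≤ treeWalk τ k := by
  have hk : k < τ.card := lt_of_le_of_lt hkn hn
  have hj : j < τ.card := lt_of_le_of_lt hjk hk
  have hpre2 : vertexAt τ j <+: vertexAt τ k :=
    prefix_sandwich hpre (vertexAt_mono hjk hk) (vertexAt_mono hkn hn)
  rw [walk_eq_wsum hτ hj, walk_eq_wsum hτ hk]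
  have heq : vertexAt τ j = (vertexAt τ k).take (vertexAt τ j).length :=
    List.prefix_iff_eq_take.1 hpre2
  rw [heq]
  exact wsum_take_le hτ (vertexAt_mem hk) hpre2.length_le

lemma exists_lt_of_not_prefix (hτ : IsTree τ) {j n : ℕ} (hjn : j < n) (hn : n < τ.card)
    (hpre : ¬ vertexAt τ j <+: vertexAt τ n) :
    ∃ k, j < k ∧ k ≤ n ∧ treeWalk τ k < treeWalk τ j := by
  have hj : j < τ.card := lt_trans hjn hn
  have hlt : vertexAt τ j < vertexAt τ n := vertexAt_strictMono hjn hn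
  rcases lex_decomp hlt with hp | ⟨q, x, y, s, t, hjq, hnq, hxy⟩
  · exact absurd hp hpre
  · have hqj : (vertexAt τ j).take q.length = q := by
      rw [hjq, List.take_append_of_le_length le_rfl, List.take_of_length_le le_rfl]
    have hqmem : q ∈ τ := by
      rw [← hqj]; exact mem_take hτ (vertexAt_mem hj) _
    have hqy : q ++ [y] ∈ τ := by
      have : (vertexAt τ n).take (q.length + 1) = q ++ [y] := by
        rw [hnq]; exact take_append_cons q y t
      rw [← this]; exact mem_take hτ (vertexAt_mem hn) _
    have hyk := (mem_append_iff hτ hqmem y).1 hqy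
    have hvmem : q ++ [x + 1] ∈ τ :=
      (mem_append_iff hτ hqmem (x + 1)).2 ⟨by omega, by omega⟩
    set k := idx τ (q ++ [x + 1]) with hkdef
    have hvk : vertexAt τ k = q ++ [x + 1] := vertexAt_idx hvmem
    have hkc : k < τ.card := idx_lt_card hvmem
    refine ⟨k, ?_, ?_, ?_⟩
    · -- j < k
      have h1 : vertexAt τ j < q ++ [x + 1] := by
        rw [hjq]
        have heq1 : q ++ [x + 1] = q ++ (x+1) :: ([] : List ℕ) := by simp
        rw [heq1]
        exact lex_middle (Nat.lt_succ_self x)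
      have := idx_lt_idx (vertexAt_mem hj) hvmem h1
      rwa [idx_vertexAt hj] at this
    · -- k ≤ n
      have h1 : q ++ [x + 1] ≤ vertexAt τ n := by
        rcases eq_or_lt_of_le (Nat.succ_le_of_lt hxy) with hy | hy
        · rw [hnq, ← hy]
          exact le_of_prefix ⟨t, by simp⟩
        · rw [hnq]
          exact le_of_lt (lex_middle hy)
      rcases eq_or_lt_of_le h1 with he | hlt'
      · rw [← idx_vertexAt hn, ← he]
      · have := idx_lt_idx hvmem (vertexAt_mem hn) hlt'
        rw [idx_vertexAt hn] at this
        exact le_of_lt this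
    · -- walk decreases
      rw [walk_eq_wsum hτ hkc, walk_eq_wsum hτ hj, hvk, wsum_append_singleton]
      have h2 : wsum τ q + (childCount τ q : ℤ) - x ≤ wsum τ (vertexAt τ j) := by
        have hqlen : q.length + 1 ≤ (vertexAt τ j).length := by rw [hjq]; simp
        have htk : (vertexAt τ j).take (q.length + 1) = q ++ [x] := by
          rw [hjq]; exact take_append_cons q x s
        have := wsum_take_le hτ (vertexAt_mem hj) hqlen
        rwa [htk, wsum_append_singleton] at this
      push_cast
      omega

end LukasHelper

open LukasHelper in
/-- for every `0 ≤ n < ζ(τ)`, the height `H_n(τ) = |u(n)|` satisfies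
`H_n(τ) = Card { 0 ≤ j < n : W_j(τ) = min_{j ≤ k ≤ n} W_k(τ) }`. -/
theorem height_eq_card_future_minima (τ : Finset (List ℕ)) (hτ : IsTree τ)
    (n : ℕ) (hn : n < τ.card) :
    treeHeight τ n =
      {j : ℕ | j < n ∧ treeWalk τ j = sInf (treeWalk τ '' Set.Icc j n)}.ncard := by
  classical
  set u := vertexAt τ n with hu
  have hchar : ∀ j, (j < n ∧ treeWalk τ j = sInf (treeWalk τ '' Set.Icc j n)) ↔
      (j < n ∧ vertexAt τ j <+: u) := by
    intro j
    constructor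
    · rintro ⟨hjn, hmin⟩
      refine ⟨hjn, ?_⟩
      by_contra hpre
      obtain ⟨k, hjk, hkn, hwk⟩ := exists_lt_of_not_prefix hτ hjn hn hpre
      have hbdd : BddBelow (treeWalk τ '' Set.Icc j n) :=
        ((Set.finite_Icc j n).image _).bddBelow
      have hmem : treeWalk τ k ∈ treeWalk τ '' Set.Icc j n :=
        ⟨k, ⟨le_of_lt hjk, hkn⟩, rfl⟩
      have := csInf_le hbdd hmem
      rw [← hmin] at this
      omega
    · rintro ⟨hjn, hpre⟩
      refine ⟨hjn, ?_⟩
      have hmem : treeWalk τ j ∈ treeWalk τ '' Set.Icc j n :=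
        ⟨j, ⟨le_rfl, le_of_lt hjn⟩, rfl⟩
      have hbdd : BddBelow (treeWalk τ '' Set.Icc j n) :=
        ((Set.finite_Icc j n).image _).bddBelow
      refine le_antisymm ?_ (csInf_le hbdd hmem)
      apply le_csInf ⟨_, hmem⟩
      rintro z ⟨k, ⟨hjk, hkn⟩, rfl⟩
      exact walk_le_of_prefix hτ hjk hkn hn hpre
  have himg : {j : ℕ | j < n ∧ treeWalk τ j = sInf (treeWalk τ '' Set.Icc j n)} =
      (fun i => idx τ (u.take i)) '' Set.Iio u.length := by
    ext j
    rw [Set.mem_setOf_eq, hchar j]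
    constructor
    · rintro ⟨hjn, hpre⟩
      have hj : j < τ.card := lt_trans hjn hn
      have hne : vertexAt τ j ≠ u := ne_of_lt (vertexAt_strictMono hjn hn)
      have hlenlt : (vertexAt τ j).length < u.length := by
        rcases lt_or_eq_of_le hpre.length_le with h | h
        · exact h
        · exact absurd (List.IsPrefix.eq_of_length hpre h) hne
      refine ⟨(vertexAt τ j).length, hlenlt, ?_⟩
      have hteq := List.prefix_iff_eq_take.1 hpre
      show idx τ (List.take (vertexAt τ j).length u) = j
      rw [← hteq, idx_vertexAt hj]
    · rintro ⟨i, hi, rfl⟩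
      rw [Set.mem_Iio] at hi
      have hvmem : u.take i ∈ τ := mem_take hτ (vertexAt_mem hn) i
      have hlen : (u.take i).length = i := by simp [Nat.min_eq_left (le_of_lt hi)]
      have hpre : u.take i <+: u := List.take_prefix i u
      have hne : u.take i ≠ u := by
        intro h
        rw [h] at hlen
        omega
      have hlt : u.take i < u := lt_of_prefix_ne hpre hne
      have hidx : idx τ (u.take i) < n := by
        have := idx_lt_idx hvmem (vertexAt_mem hn) hlt
        rwa [idx_vertexAt hn] at this
      exact ⟨hidx, by rw [vertexAt_idx hvmem]; exact hpre⟩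
  rw [himg]
  have hinj : Set.InjOn (fun i => idx τ (u.take i)) (Set.Iio u.length) := by
    intro i hi i' hi' heq
    rw [Set.mem_Iio] at hi hi'
    have h1 : u.take i ∈ τ := mem_take hτ (vertexAt_mem hn) i
    have h2 : u.take i' ∈ τ := mem_take hτ (vertexAt_mem hn) i'
    have heq' : idx τ (u.take i) = idx τ (u.take i') := heq
    have hteq : u.take i = u.take i' := by
      have e1 := vertexAt_idx h1
      have e2 := vertexAt_idx h2
      rw [← e1, ← e2, heq']
    have l1 : (u.take i).length = i := by simp [Nat.min_eq_left (le_of_lt hi)]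
    have l2 : (u.take i').length = i' := by simp [Nat.min_eq_left (le_of_lt hi')]
    rw [← l1, ← l2, hteq]
  rw [Set.ncard_image_of_injOn hinj, ← Finset.coe_range, Set.ncard_coe_finset,
    Finset.card_range]
  rfl
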